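/- Let G be a group and S a family of subgroups of G of finite index such that: (i) S has VC-dimension at most k as a family of subsets of G, (ii) the dual family has VC-dimension at most m (so any finite intersection of members of S of index ≤ n equals an intersection of at most m of them). Then the number of subgroups in S of index at most n is at most π(n^m), where π is the shatter function of S; in particular it is at most C·n^{km} for a constant C depending only on k. -/

import Mathlib

/-- The shatter function of a family `S` of subsets of `X`: the maximal number
of traces `s ∩ A` (`s ∈ S`) on a set `A` of size at most `t`. -/
noncomputable def shatterFn {X : Type*} (S : Set (Set X)) (t : ℕ) : ℕ :=
  sSup {c : ℕ | ∃ A : Finset X, A.card ≤ t ∧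
    c = {T : Set X | ∃ s ∈ S, T = s ∩ (A : Set X)}.ncard}

section Aux

open scoped Classical

variable {G : Type*} [Group G]

/-- The Baldwin–Saxl product trick: if every member `H` of `B` misses some
element of the intersection of the others, then every subset of `B` can be
"cut out" (complementwise) by a single group element. -/
private lemma bs_prod_trick (B : Finset (Subgroup G))
    (hx : ∀ H ∈ B, ∃ x : G, x ∈ (B.erase H).inf id ∧ x ∉ H) :
    ∀ C : Finset (Subgroup G), C ⊆ B → ∃ y : G, ∀ K ∈ B, (y ∈ K ↔ K ∉ C) := by
  intro C
  induction C using Finset.induction_on with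
  | empty => exact fun _ => ⟨1, fun K _ => by simp [Subgroup.one_mem]⟩
  | @insert H C' hHC' ih =>
    intro hsub
    have hHB : H ∈ B := hsub (Finset.mem_insert_self _ _)
    obtain ⟨y', hy'⟩ := ih (fun x hx' => hsub (Finset.mem_insert_of_mem hx'))
    obtain ⟨x, hx1, hx2⟩ := hx H hHB
    refine ⟨x * y', fun K hK => ?_⟩
    rcases eq_or_ne K H with rfl | hKH
    · have hy'K : y' ∈ K := (hy' K hK).2 hHC'
      rw [mul_mem_cancel_right hy'K]
      simp [hx2]
    · have hxK : x ∈ K := by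
        have hle : (B.erase H).inf id ≤ id K :=
          Finset.inf_le (Finset.mem_erase.2 ⟨hKH, hK⟩)
        exact hle hx1
      rw [mul_mem_cancel_left hxK, hy' K hK]
      simp [Finset.mem_insert, hKH]

/-- Baldwin–Saxl: assuming the dual VC bound `m`, the intersection of any
finite family of subgroups from `S` is the intersection of at most `m` of
them. -/
private lemma bs_small_inter (S : Set (Subgroup G)) (m : ℕ)
    (hdual : ∀ A : Finset (Subgroup G), (A : Set (Subgroup G)) ⊆ S →
      (∀ B ∈ A.powerset, ∃ x : G, ∀ H ∈ A, (x ∈ H ↔ H ∈ B)) → A.card ≤ m)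
    (B : Finset (Subgroup G)) (hBS : (B : Set (Subgroup G)) ⊆ S) :
    ∃ B' : Finset (Subgroup G), B' ⊆ B ∧ B'.card ≤ m ∧ B'.inf id = B.inf id := by
  classical
  obtain ⟨B', hB'P, hmin⟩ := Finset.exists_min_image
      (B.powerset.filter fun B'' => B''.inf id = B.inf id) Finset.card
      ⟨B, by simp⟩
  simp only [Finset.mem_filter, Finset.mem_powerset] at hB'P
  obtain ⟨hB'B, hinf⟩ := hB'P
  have hxs : ∀ H ∈ B', ∃ x : G, x ∈ (B'.erase H).inf id ∧ x ∉ H := by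
    intro H hH
    by_contra hcon
    push_neg at hcon
    have hle : (B'.erase H).inf id ≤ H := fun x hx => hcon x hx
    have heq : (B'.erase H).inf id = B'.inf id := by
      refine le_antisymm (Finset.le_inf ?_) (Finset.inf_mono (Finset.erase_subset _ _))
      intro K hK
      rcases eq_or_ne K H with rfl | hne
      · exact hle
      · exact Finset.inf_le (Finset.mem_erase.2 ⟨hne, hK⟩)
    have hmem : B'.erase H ∈ B.powerset.filter fun B'' => B''.inf id = B.inf id := by
      simp only [Finset.mem_filter, Finset.mem_powerset]
      exact ⟨(Finset.erase_subset _ _).trans hB'B, heq.trans hinf⟩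
    have hge := hmin _ hmem
    have hlt := Finset.card_erase_lt_of_mem hH
    omega
  refine ⟨B', hB'B, ?_, hinf⟩
  refine hdual B' (fun H hH => hBS (hB'B hH)) ?_
  intro B'' hB''
  obtain ⟨y, hy⟩ := bs_prod_trick B' hxs (B' \ B'') Finset.sdiff_subset
  refine ⟨y, fun H hH => ?_⟩
  rw [hy H hH]
  simp [Finset.mem_sdiff, hH]

private lemma index_inf_pow (n : ℕ) :
    ∀ B : Finset (Subgroup G), (∀ H ∈ B, H.index ≤ n) →
      (B.inf id).index ≤ n ^ B.card := by
  intro B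
  induction B using Finset.induction_on with
  | empty => intro _; simp [Subgroup.index_top]
  | @insert H B hHB ih =>
    intro h
    rw [Finset.inf_insert, Finset.card_insert_of_notMem hHB]
    calc (id H ⊓ B.inf id).index ≤ H.index * (B.inf id).index := Subgroup.index_inf_le
      _ ≤ n * n ^ B.card := Nat.mul_le_mul (h H (Finset.mem_insert_self _ _))
          (ih fun K hK => h K (Finset.mem_insert_of_mem hK))
      _ = n ^ (B.card + 1) := by ring

private lemma index_inf_ne_zero_finset :
    ∀ B : Finset (Subgroup G), (∀ H ∈ B, H.index ≠ 0) → (B.inf id).index ≠ 0 := by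
  intro B
  induction B using Finset.induction_on with
  | empty => intro _; simp [Subgroup.index_top]
  | @insert H B hHB ih =>
    intro h
    rw [Finset.inf_insert]
    exact Subgroup.index_inf_ne_zero (h H (Finset.mem_insert_self _ _))
      (ih fun K hK => h K (Finset.mem_insert_of_mem hK))

end Aux

/-- Polynomial subgroup growth for NIP (finite VC-dimension) families of
subgroups: if a family `S` of finite index subgroups of `G` has VC-dimension at
most `k` and its dual family has VC-dimension at most `m`, then the number of
subgroups in `S` of index at most `n` is bounded by the shatter function
evaluated at `n ^ m`, and in particular by `C * n ^ (k * m)` for some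
constant `C` depending only on `k`. -/
theorem nip_polynomial_subgroup_growth
    (G : Type*) [Group G] (S : Set (Subgroup G)) (k m : ℕ)
    (hfin : ∀ H ∈ S, H.index ≠ 0)
    (hVC : ∀ A : Finset G,
      (∀ B ∈ A.powerset, ∃ H ∈ S, ∀ x ∈ A, (x ∈ H ↔ x ∈ B)) → A.card ≤ k)
    (hdual : ∀ A : Finset (Subgroup G), (A : Set (Subgroup G)) ⊆ S →
      (∀ B ∈ A.powerset, ∃ x : G, ∀ H ∈ A, (x ∈ H ↔ H ∈ B)) → A.card ≤ m) :
    (∀ n : ℕ, {H : Subgroup G | H ∈ S ∧ H.index ≤ n}.ncard ≤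
        shatterFn ((fun H : Subgroup G => (H : Set G)) '' S) (n ^ m)) ∧
      ∃ C : ℕ, ∀ n : ℕ, {H : Subgroup G | H ∈ S ∧ H.index ≤ n}.ncard ≤
        C * n ^ (k * m) := by
  classical
  -- the case n = 0 : the set of subgroups of index ≤ 0 is empty
  have hzero : {H : Subgroup G | H ∈ S ∧ H.index ≤ 0} = ∅ := by
    ext H
    simp only [Set.mem_setOf_eq, Set.mem_empty_iff_false, iff_false, not_and, Nat.le_zero]
    exact fun hH => hfin H hH
  -- the core construction: a small test set `A` on which distinct small-index
  -- subgroups in `S` have distinct traces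
  have core : ∀ n : ℕ, 1 ≤ n → ∃ A : Finset G, A.card ≤ n ^ m ∧
      Set.InjOn (fun H : Subgroup G => (H : Set G) ∩ (A : Set G))
        {H : Subgroup G | H ∈ S ∧ H.index ≤ n} := by
    intro n hn
    set F : Set (Subgroup G) := {H : Subgroup G | H ∈ S ∧ H.index ≤ n} with hF
    have hbound : ∀ B : Finset (Subgroup G), (B : Set (Subgroup G)) ⊆ F →
        (B.inf id).index ≤ n ^ m := by
      intro B hBF
      obtain ⟨B', hsub, hcard, hinf⟩ := bs_small_inter S m hdual B
        (fun H hH => (hBF hH).1)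
      rw [← hinf]
      calc (B'.inf id).index ≤ n ^ B'.card :=
            index_inf_pow n B' (fun H hH => (hBF (hsub hH)).2)
        _ ≤ n ^ m := Nat.pow_le_pow_right hn hcard
    set D : Set ℕ :=
      {c : ℕ | ∃ B : Finset (Subgroup G), (B : Set (Subgroup G)) ⊆ F ∧
        c = (B.inf id).index} with hD
    have hDne : D.Nonempty := ⟨(⊤ : Subgroup G).index, ∅, by simp, by simp⟩
    have hDbdd : BddAbove D := by
      refine ⟨n ^ m, fun c hc => ?_⟩
      obtain ⟨B, hB, rfl⟩ := hc
      exact hbound B hB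
    obtain ⟨B0, hB0F, hc0⟩ := Nat.sSup_mem hDne hDbdd
    set N : Subgroup G := B0.inf id with hN
    have hNfin : N.index ≠ 0 :=
      index_inf_ne_zero_finset B0 (fun H hH => hfin H (hB0F hH).1)
    have hNidx : N.index ≤ n ^ m := hbound B0 hB0F
    -- N is contained in every member of F
    have hNle : ∀ H ∈ F, N ≤ H := by
      intro H hHF
      set K : Subgroup G := (insert H B0).inf id with hK
      have hmemins : ∀ H' ∈ insert H B0, H' ∈ F := by
        intro H' hH'
        rcases Finset.mem_insert.1 hH' with rfl | hH'B0
        · exact hHF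
        · exact hB0F hH'B0
      have hKfin : K.index ≠ 0 :=
        index_inf_ne_zero_finset _ (fun H' hH' => hfin H' (hmemins H' hH').1)
      have hKmem : K.index ∈ D := ⟨insert H B0, fun H' hH' => hmemins H' hH', rfl⟩
      have hle1 : K.index ≤ N.index := hc0 ▸ le_csSup hDbdd hKmem
      have hKN : K ≤ N := by
        rw [hK, Finset.inf_insert]
        exact inf_le_right
      have hrmul := Subgroup.relIndex_mul_index hKN
      have hrne : K.relIndex N ≠ 0 := by
        intro h0
        rw [h0, zero_mul] at hrmul
        exact hKfin hrmul.symm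
      have hNpos : 0 < N.index := Nat.pos_of_ne_zero hNfin
      have hr1 : K.relIndex N = 1 := by
        by_contra hne1
        have h2 : 2 ≤ K.relIndex N := by omega
        have h3 : 2 * N.index ≤ K.relIndex N * N.index := Nat.mul_le_mul_right _ h2
        rw [hrmul] at h3
        omega
      have hNK : N ≤ K := Subgroup.relIndex_eq_one.1 hr1
      calc N ≤ K := hNK
        _ ≤ id H := Finset.inf_le (Finset.mem_insert_self _ _)
    -- the transversal of N
    have hfinQ : Finite (G ⧸ N) := Nat.finite_of_card_ne_zero hNfin
    have : Fintype (G ⧸ N) := Fintype.ofFinite _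
    refine ⟨Finset.univ.image (fun q : G ⧸ N => q.out), ?_, ?_⟩
    · calc (Finset.univ.image (fun q : G ⧸ N => q.out)).card
          ≤ Finset.univ.card := Finset.card_image_le
        _ = Fintype.card (G ⧸ N) := Finset.card_univ
        _ = N.index := by rw [Subgroup.index, Nat.card_eq_fintype_card]
        _ ≤ n ^ m := hNidx
    · -- injectivity of traces
      set A : Finset G := Finset.univ.image (fun q : G ⧸ N => q.out) with hA
      have htrans : ∀ g : G, ∃ a ∈ A, a⁻¹ * g ∈ N := by
        intro g
        refine ⟨(QuotientGroup.mk g : G ⧸ N).out, Finset.mem_image_of_mem _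
          (Finset.mem_univ _), ?_⟩
        exact (QuotientGroup.eq).1 ((QuotientGroup.mk g : G ⧸ N).out_eq)
      have step : ∀ H1 ∈ F, ∀ H2 ∈ F,
          (H1 : Set G) ∩ (A : Set G) = (H2 : Set G) ∩ (A : Set G) → H1 ≤ H2 := by
        intro H1 h1 H2 h2 heq g hg
        obtain ⟨a, haA, han⟩ := htrans g
        have ha1 : a ∈ H1 := by
          have : a⁻¹ ∈ H1 := by
            have := H1.mul_mem (hNle H1 h1 han) (H1.inv_mem hg)
            simpa [mul_assoc] using this
          simpa using H1.inv_mem this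
        have hmem1 : a ∈ (H1 : Set G) ∩ (A : Set G) := ⟨ha1, haA⟩
        rw [heq] at hmem1
        have ha2 : a ∈ H2 := hmem1.1
        have : a * (a⁻¹ * g) ∈ H2 := H2.mul_mem ha2 (hNle H2 h2 han)
        simpa [mul_assoc] using this
      intro H1 h1 H2 h2 heq
      exact le_antisymm (step H1 h1 H2 h2 heq) (step H2 h2 H1 h1 heq.symm)
  -- a numeric bound for trace families (used both for `BddAbove` and Sauer–Shelah)
  have trace_fin : ∀ (A : Finset G),
      {T : Set G | ∃ s ∈ ((fun H : Subgroup G => (H : Set G)) '' S),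
        T = s ∩ (A : Set G)}.Finite := by
    intro A
    refine Set.Finite.subset ((A : Set G).toFinite.finite_subsets) ?_
    rintro T ⟨s, _, rfl⟩
    exact Set.inter_subset_right
  -- the associated finset of traces
  have trace_card : ∀ (A : Finset G),
      {T : Set G | ∃ s ∈ ((fun H : Subgroup G => (H : Set G)) '' S),
        T = s ∩ (A : Set G)}.ncard ≤
        (((trace_fin A).toFinset).image (fun T => A.filter (fun x => x ∈ T))).card := by
    intro A
    rw [Set.ncard_eq_toFinset_card _ (trace_fin A)]
    apply Finset.card_le_card_of_injOn (fun T => A.filter (fun x => x ∈ T))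
    · intro T hT
      exact Finset.mem_image_of_mem _ hT
    · intro T1 hT1 T2 hT2 hf
      simp only [Set.Finite.coe_toFinset, Set.mem_setOf_eq] at hT1 hT2
      obtain ⟨s1, _, rfl⟩ := hT1
      obtain ⟨s2, _, rfl⟩ := hT2
      ext x
      have hf2 := Finset.ext_iff.1 hf x
      simp only [Finset.mem_filter] at hf2
      constructor
      · intro hx
        exact (hf2.1 ⟨hx.2, hx⟩).2
      · intro hx
        exact (hf2.2 ⟨hx.2, hx⟩).2
  constructor
  · -- first bound : via the shatter function
    intro n
    rcases Nat.eq_zero_or_pos n with rfl | hn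
    · rw [hzero]
      simp
    obtain ⟨A, hAcard, hinj⟩ := core n hn
    have hmaps : ∀ H ∈ {H : Subgroup G | H ∈ S ∧ H.index ≤ n},
        (H : Set G) ∩ (A : Set G) ∈
          {T : Set G | ∃ s ∈ ((fun H : Subgroup G => (H : Set G)) '' S),
            T = s ∩ (A : Set G)} :=
      fun H hH => ⟨(H : Set G), ⟨H, hH.1, rfl⟩, rfl⟩
    have hcard : {H : Subgroup G | H ∈ S ∧ H.index ≤ n}.ncard ≤
        {T : Set G | ∃ s ∈ ((fun H : Subgroup G => (H : Set G)) '' S),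
          T = s ∩ (A : Set G)}.ncard :=
      Set.ncard_le_ncard_of_injOn _ hmaps hinj (trace_fin A)
    refine hcard.trans (le_csSup ?_ ⟨A, hAcard, rfl⟩)
    -- BddAbove
    refine ⟨2 ^ (n ^ m), ?_⟩
    rintro c ⟨A', hA', rfl⟩
    calc {T : Set G | ∃ s ∈ ((fun H : Subgroup G => (H : Set G)) '' S),
          T = s ∩ (A' : Set G)}.ncard
        ≤ (((trace_fin A').toFinset).image
            (fun T => A'.filter (fun x => x ∈ T))).card := trace_card A'
      _ ≤ A'.powerset.card := by
          apply Finset.card_le_card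
          intro B hB
          obtain ⟨T, _, rfl⟩ := Finset.mem_image.1 hB
          exact Finset.mem_powerset.2 (Finset.filter_subset _ _)
      _ = 2 ^ A'.card := Finset.card_powerset A'
      _ ≤ 2 ^ (n ^ m) := Nat.pow_le_pow_right (by norm_num) hA'
  · -- second bound : via Sauer–Shelah
    refine ⟨k + 1, fun n => ?_⟩
    rcases Nat.eq_zero_or_pos n with rfl | hn
    · rw [hzero, Set.ncard_empty]
      exact Nat.zero_le _
    obtain ⟨A, hAcard, hinj⟩ := core n hn
    set 𝒜 : Finset (Finset G) :=
      ((trace_fin A).toFinset).image (fun T => A.filter (fun x => x ∈ T)) with h𝒜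
    have hmaps : ∀ H ∈ {H : Subgroup G | H ∈ S ∧ H.index ≤ n},
        (H : Set G) ∩ (A : Set G) ∈
          {T : Set G | ∃ s ∈ ((fun H : Subgroup G => (H : Set G)) '' S),
            T = s ∩ (A : Set G)} :=
      fun H hH => ⟨(H : Set G), ⟨H, hH.1, rfl⟩, rfl⟩
    have hcard1 : {H : Subgroup G | H ∈ S ∧ H.index ≤ n}.ncard ≤ 𝒜.card :=
      (Set.ncard_le_ncard_of_injOn _ hmaps hinj (trace_fin A)).trans (trace_card A)
    -- every set shattered by 𝒜 has size at most k
    have hshat : ∀ s ∈ 𝒜.shatterer, s.card ≤ k := by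
      intro s hs
      have hsh : 𝒜.Shatters s := Finset.mem_shatterer.1 hs
      have hsA : s ⊆ A := by
        obtain ⟨u, hu, hsu⟩ := hsh.exists_superset
        obtain ⟨T, _, rfl⟩ := Finset.mem_image.1 hu
        exact hsu.trans (Finset.filter_subset _ _)
      refine hVC s ?_
      intro B hB
      obtain ⟨u, hu, hsub⟩ := hsh (Finset.mem_powerset.1 hB)
      obtain ⟨T, hT, rfl⟩ := Finset.mem_image.1 hu
      simp only [Set.Finite.mem_toFinset, Set.mem_setOf_eq] at hT
      obtain ⟨s', ⟨H, hHS, rfl⟩, rfl⟩ := hT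
      refine ⟨H, hHS, fun x hx => ?_⟩
      have hxA : x ∈ A := hsA hx
      have hsub2 := Finset.ext_iff.1 hsub x
      simp only [Finset.mem_inter, Finset.mem_filter, Set.mem_inter_iff,
        Finset.mem_coe, SetLike.mem_coe] at hsub2
      constructor
      · intro hxH
        exact hsub2.1 ⟨hx, hxA, hxH, hxA⟩
      · intro hxB
        exact ((hsub2.2 hxB).2.2).1
    -- Sauer–Shelah (Pajor) and counting
    have hsub2 : 𝒜.shatterer ⊆
        (Finset.range (k + 1)).biUnion (fun i => A.powersetCard i) := by
      intro s hs
      have hsA : s ⊆ A := by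
        have hsh : 𝒜.Shatters s := Finset.mem_shatterer.1 hs
        obtain ⟨u, hu, hsu⟩ := hsh.exists_superset
        obtain ⟨T, _, rfl⟩ := Finset.mem_image.1 hu
        exact hsu.trans (Finset.filter_subset _ _)
      refine Finset.mem_biUnion.2 ⟨s.card, Finset.mem_range.2 ?_, ?_⟩
      · exact Nat.lt_succ_of_le (hshat s hs)
      · exact Finset.mem_powersetCard.2 ⟨hsA, rfl⟩
    have hnm1 : 1 ≤ n ^ m := Nat.one_le_pow _ _ hn
    calc {H : Subgroup G | H ∈ S ∧ H.index ≤ n}.ncard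
        ≤ 𝒜.card := hcard1
      _ ≤ 𝒜.shatterer.card := Finset.card_le_card_shatterer 𝒜
      _ ≤ ((Finset.range (k + 1)).biUnion (fun i => A.powersetCard i)).card :=
          Finset.card_le_card hsub2
      _ ≤ ∑ i ∈ Finset.range (k + 1), (A.powersetCard i).card :=
          Finset.card_biUnion_le
      _ ≤ ∑ i ∈ Finset.range (k + 1), n ^ (m * k) := by
          apply Finset.sum_le_sum
          intro i hi
          rw [Finset.card_powersetCard]
          calc A.card.choose i ≤ A.card ^ i := Nat.choose_le_pow _ _
            _ ≤ (n ^ m) ^ i := Nat.pow_le_pow_left hAcard i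
            _ ≤ (n ^ m) ^ k := Nat.pow_le_pow_right hnm1
                (Nat.lt_succ_iff.1 (Finset.mem_range.1 hi))
            _ = n ^ (m * k) := by rw [← pow_mul]
      _ = (k + 1) * n ^ (m * k) := by
          rw [Finset.sum_const, Finset.card_range, smul_eq_mul]
      _ = (k + 1) * n ^ (k * m) := by rw [Nat.mul_comm k m]
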